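/- The divided difference operators satisfy the type A braid relation: ∂_i ∘ ∂_{i+1} ∘ ∂_i = ∂_{i+1} ∘ ∂_i ∘ ∂_{i+1} as operators on ℂ[x_1,...,x_n], for 1 ≤ i ≤ n-2. -/

import Mathlib

open MvPolynomial

/-- The divided difference operators satisfy the type A braid relation
`∂_i ∘ ∂_{i+1} ∘ ∂_i = ∂_{i+1} ∘ ∂_i ∘ ∂_{i+1}` on `ℂ[x_1,...,x_n]`.
Here `∂_i` (resp. `∂_{i+1}`) is characterized by
`(x_{i+1} - x_i) * ∂_i f = s_i f - f` (resp. with indices shifted by one). -/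
theorem divided_difference_braid (n : ℕ) (i j k : Fin n)
    (hij : (i : ℕ) + 1 = (j : ℕ)) (hjk : (j : ℕ) + 1 = (k : ℕ))
    (Di Dj : MvPolynomial (Fin n) ℂ → MvPolynomial (Fin n) ℂ)
    (hDi : ∀ f, (X j - X i) * Di f = rename (Equiv.swap i j) f - f)
    (hDj : ∀ f, (X k - X j) * Dj f = rename (Equiv.swap j k) f - f) :
    ∀ f, Di (Dj (Di f)) = Dj (Di (Dj f)) := by
  intro f
  have hij' : i ≠ j := fun h => by rw [h] at hij; omega
  have hjk' : j ≠ k := fun h => by rw [h] at hjk; omega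
  have hik' : i ≠ k := fun h => by rw [h] at hij; omega
  set S : MvPolynomial (Fin n) ℂ →ₐ[ℂ] MvPolynomial (Fin n) ℂ := rename (Equiv.swap i j) with hS
  set T : MvPolynomial (Fin n) ℂ →ₐ[ℂ] MvPolynomial (Fin n) ℂ := rename (Equiv.swap j k) with hT
  have Sa : S (X i) = X j := by simp [hS]
  have Sb : S (X j) = X i := by simp [hS]
  have Sc : S (X k) = X k := by simp [hS, Equiv.swap_apply_of_ne_of_ne hik'.symm hjk'.symm]
  have Ta : T (X i) = X i := by simp [hT, Equiv.swap_apply_of_ne_of_ne hij' hik']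
  have Tb : T (X j) = X k := by simp [hT]
  have Tc : T (X k) = X j := by simp [hT]
  -- braid for renames
  have eperm : Equiv.swap i j * (Equiv.swap j k * Equiv.swap i j)
      = Equiv.swap j k * (Equiv.swap i j * Equiv.swap j k) := by
    rw [← mul_assoc, ← mul_assoc]
    rw [show Equiv.swap i j * Equiv.swap j k * Equiv.swap i j = Equiv.swap i k from by
      rw [Equiv.swap_comm i j, Equiv.swap_comm j k]
      exact Equiv.swap_mul_swap_mul_swap hjk'.symm hik'.symm]
    rw [Equiv.swap_mul_swap_mul_swap hij' hik', Equiv.swap_comm]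
  have braid : S (T (S f)) = T (S (T f)) := by
    simp only [hS, hT, rename_rename, ← Equiv.Perm.coe_mul]
    rw [eperm]
  have SS : ∀ g : MvPolynomial (Fin n) ℂ, S (S g) = g := by
    intro g
    simp only [hS, rename_rename]
    rw [show ⇑(Equiv.swap i j) ∘ ⇑(Equiv.swap i j) = id from by funext x; simp]
    exact rename_id_apply g
  have TT : ∀ g : MvPolynomial (Fin n) ℂ, T (T g) = g := by
    intro g
    simp only [hT, rename_rename]
    rw [show ⇑(Equiv.swap j k) ∘ ⇑(Equiv.swap j k) = id from by funext x; simp]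
    exact rename_id_apply g
  have h1 := hDi f
  have h2 := hDj (Di f)
  have h3 := hDi (Dj (Di f))
  have h4 : (X k - X i) * S (Dj (Di f)) = S (T (Di f)) - S (Di f) := by
    have := congrArg S h2
    simp only [map_mul, map_sub, Sb, Sc] at this
    exact this
  have h5 : (X k - X i) * T (Di f) = T (S f) - T f := by
    have := congrArg T h1
    simp only [map_mul, map_sub, Ta, Tb] at this
    exact this
  have h6 : (X i - X j) * S (Di f) = f - S f := by
    have := congrArg S h1
    simp only [map_mul, map_sub, Sa, Sb, SS] at this
    exact this
  have h7 : (X k - X j) * S (T (Di f)) = S (T (S f)) - S (T f) := by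
    have := congrArg S h5
    simp only [map_mul, map_sub, Sa, Sc] at this
    exact this
  have k1 := hDj f
  have k2 := hDi (Dj f)
  have k3 := hDj (Di (Dj f))
  have k4 : (X k - X i) * T (Di (Dj f)) = T (S (Dj f)) - T (Dj f) := by
    have := congrArg T k2
    simp only [map_mul, map_sub, Ta, Tb] at this
    exact this
  have k5 : (X k - X i) * S (Dj f) = S (T f) - S f := by
    have := congrArg S k1
    simp only [map_mul, map_sub, Sb, Sc] at this
    exact this
  have k6 : (X j - X k) * T (Dj f) = f - T f := by
    have := congrArg T k1
    simp only [map_mul, map_sub, Tb, Tc, TT] at this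
    exact this
  have k7 : (X j - X i) * T (S (Dj f)) = T (S (T f)) - T (S f) := by
    have := congrArg T k5
    simp only [map_mul, map_sub, Ta, Tc] at this
    exact this
  have E1 : ((X j - X i) * (X k - X j) * (X k - X i) * (X j - X i)) * Di (Dj (Di f))
      = (X j - X i) * (S (T (S f)) - S (T f) - T (S f) + T f + S f - f) := by
    linear_combination ((X j - X i) * (X k - X j) * (X k - X i)) * h3
      + ((X j - X i) * (X k - X j)) * h4 - ((X j - X i) * (X k - X i)) * h2
      + (X j - X i) * h7 + (X k - X j) * h6 - (X j - X i) * h5 + (X k - X i) * h1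
  have E2 : ((X k - X j) * (X j - X i) * (X k - X i) * (X k - X j)) * Dj (Di (Dj f))
      = (X k - X j) * (T (S (T f)) - S (T f) - T (S f) + T f + S f - f) := by
    linear_combination ((X k - X j) * (X j - X i) * (X k - X i)) * k3
      + ((X k - X j) * (X j - X i)) * k4 - ((X k - X j) * (X k - X i)) * k2
      + (X k - X j) * k7 + (X j - X i) * k6 - (X k - X j) * k5 + (X k - X i) * k1
  have hab : (X j - X i : MvPolynomial (Fin n) ℂ) ≠ 0 :=
    sub_ne_zero.mpr fun h => hij' (X_injective h).symm
  have hbc : (X k - X j : MvPolynomial (Fin n) ℂ) ≠ 0 :=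
    sub_ne_zero.mpr fun h => hjk' (X_injective h).symm
  have hac : (X k - X i : MvPolynomial (Fin n) ℂ) ≠ 0 :=
    sub_ne_zero.mpr fun h => hik' (X_injective h).symm
  have hM : ((X j - X i) * (X j - X i) * (X k - X j) * (X k - X j) * (X k - X i)
      : MvPolynomial (Fin n) ℂ) ≠ 0 :=
    mul_ne_zero (mul_ne_zero (mul_ne_zero (mul_ne_zero hab hab) hbc) hbc) hac
  refine mul_left_cancel₀ hM ?_
  linear_combination (X k - X j) * E1 - (X j - X i) * E2
    + ((X j - X i) * (X k - X j)) * braid
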